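/- If G_{h,k}(X) = G_{h,k+1}(X) for some 0 ≤ h < k, then the k-th secant variety S_k(X) equals P^r. -/

import Mathlib

open Submodule

noncomputable section

/-- Polynomial functions on a complex module: the subalgebra of functions generated by
the linear functionals. -/
def PolyFun (W : Type*) [AddCommGroup W] [Module ℂ W] : Subalgebra ℂ (W → ℂ) :=
  Algebra.adjoin ℂ {f : W → ℂ | IsLinearMap ℂ f}

/-- A subset of a complex module is algebraic (Zariski closed) if it is the common zero
set of a family of polynomial functions. -/
def IsAlgSet {W : Type*} [AddCommGroup W] [Module ℂ W] (X : Set W) : Prop :=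
  ∃ S : Set (W → ℂ), S ⊆ (PolyFun W : Set (W → ℂ)) ∧ X = {x | ∀ f ∈ S, f x = 0}

/-- Zariski closure. -/
def zcl {W : Type*} [AddCommGroup W] [Module ℂ W] (A : Set W) : Set W :=
  ⋂₀ {Y | IsAlgSet Y ∧ A ⊆ Y}

/-- Irreducible algebraic set. -/
def IsIrrAlg {W : Type*} [AddCommGroup W] [Module ℂ W] (X : Set W) : Prop :=
  X.Nonempty ∧ IsAlgSet X ∧
    ∀ Y Z : Set W, IsAlgSet Y → IsAlgSet Z → X ⊆ Y ∪ Z → X ⊆ Y ∨ X ⊆ Z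

/-- Dimension of an (affine) algebraic set: the supremum of the lengths of strict chains
of irreducible algebraic subsets contained in it. -/
def adim {W : Type*} [AddCommGroup W] [Module ℂ W] (X : Set W) : ℕ∞ :=
  sSup {d : ℕ∞ | ∃ n : ℕ, d = (n : ℕ∞) ∧
    ∃ c : Fin (n + 1) → Set W, StrictMono c ∧ ∀ i, IsIrrAlg (c i) ∧ c i ⊆ X}

/-- Projective dimension of a cone: one less than the dimension of the affine cone. -/
def pdim {W : Type*} [AddCommGroup W] [Module ℂ W] (X : Set W) : ℕ∞ := adim X - 1

/-- A cone in a complex module (the affine cone of a projective set). -/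
def IsCone {W : Type*} [AddCommGroup W] [Module ℂ W] (X : Set W) : Prop :=
  (0 : W) ∈ X ∧ ∀ (c : ℂ) (x : W), x ∈ X → c • x ∈ X

/-- The affine cone of an integral projective variety: an irreducible algebraic cone,
different from the origin alone. -/
def IsProjVar {W : Type*} [AddCommGroup W] [Module ℂ W] (X : Set W) : Prop :=
  IsAlgSet X ∧ IsCone X ∧ IsIrrAlg X ∧ X ≠ {0}

/-- Non-degenerate: the cone spans the ambient space. -/
def Nondeg {W : Type*} [AddCommGroup W] [Module ℂ W] (X : Set W) : Prop :=
  Submodule.span ℂ X = ⊤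

/-- The projective set is a cone over some vertex: there is a point `v` (vertex) of the
variety such that the variety is a union of lines through the vertex. -/
def IsConeVar {W : Type*} [AddCommGroup W] [Module ℂ W] (X : Set W) : Prop :=
  ∃ v ∈ X, v ≠ 0 ∧ ∀ x ∈ X, ∀ a b : ℂ, a • v + b • x ∈ X

/-- Affine cone of the `k`-th secant variety `S_k(X)`: the Zariski closure of the union
of the linear spans of `k+1` points of `X`. -/
def Sec {W : Type*} [AddCommGroup W] [Module ℂ W] (X : Set W) (k : ℕ) : Set W :=
  zcl (⋃ p ∈ {p : Fin (k + 1) → W | ∀ i, p i ∈ X},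
    (Submodule.span ℂ (Set.range p) : Set W))

/-- Plücker points of the spans of `(k+1)`-tuples of points of `X`: the raw affine cone
over the image of the span map `Φ : X^{k+1} ⇢ G(k,r)` in Plücker coordinates. -/
def GkConePre {W : Type*} [AddCommGroup W] [Module ℂ W] (X : Set W) (k : ℕ) :
    Set (ExteriorAlgebra ℂ W) :=
  {w | ∃ p : Fin (k + 1) → W, (∀ i, p i ∈ X) ∧ w = ExteriorAlgebra.ιMulti ℂ (k + 1) p}

/-- Affine cone over `G_k(X)` (in Plücker coordinates): Zariski closure of the cone over
the image of the span map. -/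
def GkCone {W : Type*} [AddCommGroup W] [Module ℂ W] (X : Set W) (k : ℕ) :
    Set (ExteriorAlgebra ℂ W) :=
  zcl (GkConePre X k)

/-- `G_k(X)` as a set of `(k+1)`-dimensional subspaces (projective `k`-planes): those
whose Plücker point lies in the closure of the image of the span map. -/
def Gk {W : Type*} [AddCommGroup W] [Module ℂ W] (X : Set W) (k : ℕ) :
    Set (Submodule ℂ W) :=
  {U | Module.finrank ℂ U = k + 1 ∧
    ∀ p : Fin (k + 1) → W, (∀ i, p i ∈ U) →
      ExteriorAlgebra.ιMulti ℂ (k + 1) p ∈ GkCone X k}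

/-- Raw cone of Plücker points of `h`-planes contained in some `(k+1)`-secant `k`-plane. -/
def GhkConePre {W : Type*} [AddCommGroup W] [Module ℂ W] (X : Set W) (h k : ℕ) :
    Set (ExteriorAlgebra ℂ W) :=
  {w | ∃ (p : Fin (k + 1) → W) (q : Fin (h + 1) → W), (∀ i, p i ∈ X) ∧
    (∀ j, q j ∈ Submodule.span ℂ (Set.range p)) ∧
    w = ExteriorAlgebra.ιMulti ℂ (h + 1) q}

/-- Affine cone over `G_{h,k}(X)` in Plücker coordinates. -/
def GhkCone {W : Type*} [AddCommGroup W] [Module ℂ W] (X : Set W) (h k : ℕ) :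
    Set (ExteriorAlgebra ℂ W) :=
  zcl (GhkConePre X h k)


section Aux

variable {W : Type*} [AddCommGroup W] [Module ℂ W]
variable {W₂ : Type*} [AddCommGroup W₂] [Module ℂ W₂]

lemma subset_zcl (A : Set W) : A ⊆ zcl A :=
  fun _ hx => Set.mem_sInter.2 fun _ hY => hY.2 hx

lemma zcl_subset {A Y : Set W} (hY : IsAlgSet Y) (h : A ⊆ Y) : zcl A ⊆ Y :=
  Set.sInter_subset_of_mem ⟨hY, h⟩

lemma zcl_mono_zcl {A B : Set W} (h : A ⊆ zcl B) : zcl A ⊆ zcl B := by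
  intro x hx
  refine Set.mem_sInter.2 fun Y hY => ?_
  have hzb : zcl B ⊆ Y := Set.sInter_subset_of_mem hY
  exact Set.mem_sInter.1 hx Y ⟨hY.1, h.trans hzb⟩

lemma mem_polyFun_comp_affine (L : W →ₗ[ℂ] W₂) (b : W₂) {f : W₂ → ℂ}
    (hf : f ∈ PolyFun W₂) : (fun w => f (L w + b)) ∈ PolyFun W := by
  induction hf using Algebra.adjoin_induction with
  | mem g hg =>
      have h1 : (fun w : W => g (L w)) ∈ PolyFun W := by
        refine Algebra.subset_adjoin ?_
        exact ⟨fun x y => by rw [map_add, hg.map_add], fun c x => by rw [map_smul, hg.map_smul]⟩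
      have h2 : (fun _ : W => g b) ∈ PolyFun W := Subalgebra.algebraMap_mem _ (g b)
      have : (fun w : W => g (L w + b)) = (fun w : W => g (L w)) + (fun _ : W => g b) := by
        funext w; exact hg.map_add _ _
      rw [this]
      exact add_mem h1 h2
  | algebraMap r => exact Subalgebra.algebraMap_mem _ r
  | add x y hx hy ihx ihy => exact add_mem ihx ihy
  | mul x y hx hy ihx ihy => exact mul_mem ihx ihy

lemma isAlgSet_preimage_affine (L : W →ₗ[ℂ] W₂) (b : W₂) {Y : Set W₂}
    (hY : IsAlgSet Y) : IsAlgSet ((fun w => L w + b) ⁻¹' Y) := by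
  obtain ⟨S, hS, rfl⟩ := hY
  refine ⟨(fun f => fun w => f (L w + b)) '' S, ?_, ?_⟩
  · rintro _ ⟨f, hf, rfl⟩
    exact mem_polyFun_comp_affine L b (hS hf)
  · ext w
    simp only [Set.mem_preimage, Set.mem_setOf_eq, Set.forall_mem_image]

lemma image_affine_zcl (L : W →ₗ[ℂ] W₂) (b : W₂) {A : Set W} {B : Set W₂}
    (h : ∀ a ∈ A, L a + b ∈ B) : ∀ x ∈ zcl A, L x + b ∈ zcl B := by
  intro x hx
  refine Set.mem_sInter.2 ?_
  rintro Y ⟨hY, hBY⟩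
  have hsub : zcl A ⊆ (fun w => L w + b) ⁻¹' Y :=
    zcl_subset (isAlgSet_preimage_affine L b hY) (fun a ha => hBY (h a ha))
  exact hsub hx

/-- The contraction-type multilinear map `q ↦ (∏ i, f i (q i.castSucc)) • q (last)`. -/
def contractionML {h : ℕ} (f : Fin h → (W →ₗ[ℂ] ℂ)) :
    MultilinearMap ℂ (fun _ : Fin (h + 1) => W) W :=
  MultilinearMap.uncurryRight
    ((LinearMap.lsmul ℂ W).compMultilinearMap
      ((MultilinearMap.mkPiAlgebra ℂ (Fin h) ℂ).compLinearMap f))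

lemma contractionML_apply {h : ℕ} (f : Fin h → (W →ₗ[ℂ] ℂ)) (q : Fin (h + 1) → W) :
    contractionML f q = (∏ i : Fin h, f i (q i.castSucc)) • q (Fin.last h) := by
  simp [contractionML, MultilinearMap.uncurryRight_apply, Fin.init]

lemma contractionAlt_mem {h : ℕ} (f : Fin h → (W →ₗ[ℂ] ℂ)) (P : Submodule ℂ W)
    (q : Fin (h + 1) → W) (hq : ∀ j, q j ∈ P) :
    MultilinearMap.alternatization (contractionML f) q ∈ P := by
  rw [MultilinearMap.alternatization_apply]
  refine Submodule.sum_mem _ fun σ _ => ?_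
  rw [MultilinearMap.domDomCongr_apply, contractionML_apply]
  have hmem : (∏ i : Fin h, f i (q (σ i.castSucc))) • q (σ (Fin.last h)) ∈ P :=
    Submodule.smul_mem _ _ (hq _)
  rcases Int.units_eq_one_or (Equiv.Perm.sign σ) with hs | hs <;> rw [hs]
  · rwa [one_smul]
  · rw [Units.smul_def, Units.val_neg, Units.val_one, neg_zsmul, one_zsmul]
    exact neg_mem hmem

lemma contractionAlt_special {h : ℕ} (f : Fin h → (W →ₗ[ℂ] ℂ)) (x : W) (v : Fin h → W)
    (hfx : ∀ i, f i x = 0) (hfv : ∀ i l, f i (v l) = if i = l then 1 else 0) :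
    MultilinearMap.alternatization (contractionML f) (Fin.cons x v) =
      ((-1 : ℂ) ^ h) • x := by
  set q : Fin (h + 1) → W := Fin.cons x v with hqdef
  rw [MultilinearMap.alternatization_apply]
  rw [Finset.sum_eq_single_of_mem (finRotate (h + 1)) (Finset.mem_univ _)]
  · -- main term
    rw [MultilinearMap.domDomCongr_apply, contractionML_apply]
    have h1 : ∀ i : Fin h, q (finRotate (h + 1) i.castSucc) = v i := by
      intro i
      rw [finRotate_succ_apply, Fin.coeSucc_eq_succ]
      exact Fin.cons_succ _ _ _
    have h2 : q (finRotate (h + 1) (Fin.last h)) = x := by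
      rw [finRotate_last]; exact Fin.cons_zero _ _
    have hprod : (∏ i : Fin h, f i (q (finRotate (h + 1) i.castSucc))) = 1 := by
      refine Finset.prod_eq_one fun i _ => ?_
      rw [h1 i, hfv i i, if_pos rfl]
    rw [hprod, h2, one_smul, sign_finRotate, Nat.add_sub_cancel]
    rcases Nat.even_or_odd h with he | ho
    · rw [(he.neg_one_pow : ((-1 : ℤˣ) ^ h) = 1), (he.neg_one_pow : ((-1 : ℂ) ^ h) = 1),
        one_smul, one_smul]
    · rw [(ho.neg_one_pow : ((-1 : ℤˣ) ^ h) = -1), (ho.neg_one_pow : ((-1 : ℂ) ^ h) = -1),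
        Units.smul_def, Units.val_neg, Units.val_one, neg_zsmul, one_zsmul, neg_smul, one_smul]
  · -- other permutations give zero
    intro σ _ hσ
    rw [MultilinearMap.domDomCongr_apply, contractionML_apply]
    by_cases hall : ∀ i : Fin h, σ i.castSucc = i.succ
    · exfalso
      apply hσ
      refine Equiv.ext fun j => ?_
      induction j using Fin.lastCases with
      | last =>
          rw [finRotate_last]
          rcases Fin.eq_zero_or_eq_succ (σ (Fin.last h)) with h0 | ⟨i, hi⟩
          · exact h0
          · exfalso
            have : σ (Fin.last h) = σ i.castSucc := by rw [hall i, hi]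
            have hlast : Fin.last h = i.castSucc := σ.injective this
            exact (Fin.castSucc_lt_last i).ne' hlast
      | cast i => rw [hall i, finRotate_succ_apply, Fin.coeSucc_eq_succ]
    · push_neg at hall
      obtain ⟨i, hi⟩ := hall
      have hzero : f i (q (σ i.castSucc)) = 0 := by
        rcases Fin.eq_zero_or_eq_succ (σ i.castSucc) with h0 | ⟨l, hl⟩
        · rw [h0]
          simpa [q] using hfx i
        · rw [hl, show q l.succ = v l from Fin.cons_succ _ _ _, hfv i l, if_neg]
          rintro rfl
          exact hi hl
      rw [Finset.prod_eq_zero (Finset.mem_univ i) hzero, zero_smul, smul_zero]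

lemma exists_dual_family {n : ℕ} {q : Fin n → W} (hq : LinearIndependent ℂ q) :
    ∃ f : Fin n → (W →ₗ[ℂ] ℂ), ∀ i j, f i (q j) = if i = j then 1 else 0 := by
  classical
  have hs : LinearIndepOn ℂ id (Set.range q) := (linearIndepOn_id_range_iff hq.injective).mpr hq
  let b := Module.Basis.extend hs
  have hmem : ∀ j, q j ∈ hs.extend (Set.subset_univ (Set.range q)) :=
    fun j => hs.subset_extend _ ⟨j, rfl⟩
  refine ⟨fun i => b.coord ⟨q i, hmem i⟩, fun i j => ?_⟩
  have hb : q j = b ⟨q j, hmem j⟩ := (Module.Basis.extend_apply_self hs ⟨q j, hmem j⟩).symm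
  rw [hb, Module.Basis.coord_apply, Module.Basis.repr_self, Finsupp.single_apply]
  by_cases hij : i = j
  · subst hij; rw [if_pos rfl, if_pos rfl]
  · rw [if_neg, if_neg hij]
    intro hcontra
    exact hij (hq.injective (Subtype.ext_iff.1 hcontra)).symm

/-- The pre-closure set appearing in `Sec`. -/
def SecU (X : Set W) (k : ℕ) : Set W :=
  ⋃ p ∈ {p : Fin (k + 1) → W | ∀ i, p i ∈ X},
    (Submodule.span ℂ (Set.range p) : Set W)

lemma Sec_eq_zcl_SecU (X : Set W) (k : ℕ) : Sec X k = zcl (SecU X k) := rfl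

lemma mem_SecU {X : Set W} {k : ℕ} {x : W} (p : Fin (k + 1) → W) (hp : ∀ i, p i ∈ X)
    (hx : x ∈ Submodule.span ℂ (Set.range p)) : x ∈ SecU X k := by
  exact Set.mem_biUnion hp hx

lemma zero_mem_SecU {X : Set W} (hX0 : (0 : W) ∈ X) (k : ℕ) : (0 : W) ∈ SecU X k :=
  mem_SecU (fun _ => 0) (fun _ => hX0) (Submodule.zero_mem _)

end Aux

section Main

variable {W : Type*} [AddCommGroup W] [Module ℂ W]

/-- Key step: any point of a span of `k+2` points of `X` lies in the Zariski closure of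
`SecU X k`, assuming `G_{h,k}(X) = G_{h,k+1}(X)`. -/
lemma span_succ_subset_zcl_SecU {X : Set W} (hX0 : (0 : W) ∈ X) {h k : ℕ} (hhk : h < k)
    (heq : GhkCone X h k = GhkCone X h (k + 1))
    (p : Fin (k + 2) → W) (hp : ∀ i, p i ∈ X) :
    ∀ x ∈ Submodule.span ℂ (Set.range p), x ∈ zcl (SecU X k) := by
  intro x hx
  by_cases hli : LinearIndependent ℂ p
  · by_cases hx0 : x = 0
    · subst hx0
      exact subset_zcl _ (zero_mem_SecU hX0 k)
    · -- get coefficients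
      obtain ⟨c, hc⟩ := mem_span_range_iff_exists_fun ℂ |>.1 hx
      have hex : ∃ i, c i ≠ 0 := by
        by_contra hall
        push_neg at hall
        apply hx0
        rw [← hc]
        simp [hall]
      obtain ⟨i₀, hi₀⟩ := hex
      have hkk : h ≤ k + 1 := by omega
      set v : Fin h → W := fun l => p (i₀.succAbove (Fin.castLE hkk l)) with hv
      have hvind : LinearIndependent ℂ v :=
        hli.comp (fun l => i₀.succAbove (Fin.castLE hkk l))
          (Fin.succAbove_right_injective.comp (Fin.castLE_injective hkk))
      have hxnot : x ∉ Submodule.span ℂ (Set.range v) := by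
        intro hxin
        have hsub : Set.range v ⊆ p '' {i₀}ᶜ := by
          rintro _ ⟨l, rfl⟩
          exact ⟨i₀.succAbove (Fin.castLE hkk l), Fin.succAbove_ne i₀ _, rfl⟩
        have hx' : x ∈ Submodule.span ℂ (p '' {i₀}ᶜ) :=
          Submodule.span_mono hsub hxin
        have hsum' : c i₀ • p i₀ = x - ∑ j ∈ Finset.univ.erase i₀, c j • p j := by
          have h0 := Finset.add_sum_erase Finset.univ (fun j => c j • p j) (Finset.mem_univ i₀)
          rw [hc] at h0
          linear_combination (norm := module) h0
        have hmem2 : (∑ j ∈ Finset.univ.erase i₀, c j • p j) ∈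
            Submodule.span ℂ (p '' {i₀}ᶜ) :=
          Submodule.sum_mem _ fun j hj => Submodule.smul_mem _ _
            (Submodule.subset_span ⟨j, Finset.ne_of_mem_erase hj, rfl⟩)
        have hpi₀ : p i₀ ∈ Submodule.span ℂ (p '' {i₀}ᶜ) := by
          have hrw : p i₀ = (c i₀)⁻¹ • (c i₀ • p i₀) := by
            rw [smul_smul, inv_mul_cancel₀ hi₀, one_smul]
          rw [hrw, hsum']
          exact Submodule.smul_mem _ _ (sub_mem hx' hmem2)
        exact hli.notMem_span_image (by simp : i₀ ∉ ({i₀}ᶜ : Set _)) hpi₀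
      have hqind : LinearIndependent ℂ (Fin.cons x v : Fin (h + 1) → W) :=
        linearIndependent_fin_cons.2 ⟨hvind, hxnot⟩
      obtain ⟨F, hF⟩ := exists_dual_family hqind
      set f : Fin h → (W →ₗ[ℂ] ℂ) := fun i => F i.succ with hfdef
      have hfx : ∀ i, f i x = 0 := by
        intro i
        have h0 := hF i.succ 0
        rw [Fin.cons_zero] at h0
        rw [hfdef]
        simp only at h0 ⊢
        rw [h0, if_neg (Fin.succ_ne_zero i)]
      have hfv : ∀ i l, f i (v l) = if i = l then 1 else 0 := by
        intro i l
        have h0 := hF i.succ l.succ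
        rw [Fin.cons_succ] at h0
        rw [hfdef]
        simp only at h0 ⊢
        rw [h0]
        simp [Fin.succ_inj]
      have hqspan : ∀ j, (Fin.cons x v : Fin (h + 1) → W) j ∈
          Submodule.span ℂ (Set.range p) := by
        intro j
        induction j using Fin.cases with
        | zero => rw [Fin.cons_zero]; exact hx
        | succ l =>
            rw [Fin.cons_succ]
            exact Submodule.subset_span ⟨_, rfl⟩
      have hwmem : ExteriorAlgebra.ιMulti ℂ (h + 1) (Fin.cons x v) ∈
          GhkConePre X h (k + 1) := ⟨p, Fin.cons x v, hp, hqspan, rfl⟩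
      have hwz : ExteriorAlgebra.ιMulti ℂ (h + 1) (Fin.cons x v) ∈
          zcl (GhkConePre X h k) := by
        have h1 : ExteriorAlgebra.ιMulti ℂ (h + 1) (Fin.cons x v) ∈ GhkCone X h (k + 1) :=
          subset_zcl _ hwmem
        rw [← heq] at h1
        exact h1
      set L : ExteriorAlgebra ℂ W →ₗ[ℂ] W :=
        ((-1 : ℂ) ^ h) • ExteriorAlgebra.liftAlternating
          (Function.update (fun i => (0 : W [⋀^Fin i]→ₗ[ℂ] W)) (h + 1)
            (MultilinearMap.alternatization (contractionML f))) with hL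
      have hLw : ∀ q' : Fin (h + 1) → W, L (ExteriorAlgebra.ιMulti ℂ (h + 1) q') =
          ((-1 : ℂ) ^ h) • (MultilinearMap.alternatization (contractionML f)) q' := by
        intro q'
        rw [hL, LinearMap.smul_apply, ExteriorAlgebra.liftAlternating_apply_ιMulti,
          Function.update_self]
      have himg : ∀ a ∈ GhkConePre X h k, L a + 0 ∈ SecU X k := by
        rintro _ ⟨P, q', hP, hq', rfl⟩
        rw [add_zero, hLw]
        exact mem_SecU P hP (Submodule.smul_mem _ _ (contractionAlt_mem f _ q' hq'))
      have hfin := image_affine_zcl L 0 himg _ hwz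
      rw [add_zero, hLw, contractionAlt_special f x v hfx hfv, smul_smul, ← pow_add] at hfin
      have hone : ((-1 : ℂ)) ^ (h + h) = 1 := by
        rw [← two_mul, pow_mul]
        norm_num
      rwa [hone, one_smul] at hfin
  · -- dependent case: reduce to k+1 points
    rw [Fintype.not_linearIndependent_iff] at hli
    obtain ⟨g, hsum, i, hgi⟩ := hli
    have hpi : p i ∈ Submodule.span ℂ (p '' {i}ᶜ) := by
      have hsum' : g i • p i = -∑ j ∈ Finset.univ.erase i, g j • p j := by
        have := Finset.add_sum_erase Finset.univ (fun j => g j • p j) (Finset.mem_univ i)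
        rw [hsum] at this
        linear_combination (norm := module) this
      have hmem : (∑ j ∈ Finset.univ.erase i, g j • p j) ∈
          Submodule.span ℂ (p '' {i}ᶜ) := by
        refine Submodule.sum_mem _ fun j hj => Submodule.smul_mem _ _ ?_
        exact Submodule.subset_span ⟨j, Finset.ne_of_mem_erase hj, rfl⟩
      have : p i = (g i)⁻¹ • (g i • p i) := by
        rw [smul_smul, inv_mul_cancel₀ hgi, one_smul]
      rw [this, hsum']
      exact Submodule.smul_mem _ _ (neg_mem hmem)
    have hspan : Submodule.span ℂ (Set.range p) ≤
        Submodule.span ℂ (p '' {i}ᶜ) := by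
      rw [Submodule.span_le]
      rintro _ ⟨j, rfl⟩
      by_cases hji : j = i
      · subst hji; exact hpi
      · exact Submodule.subset_span ⟨j, hji, rfl⟩
    have himg : p '' {i}ᶜ = Set.range (p ∘ i.succAbove) := by
      rw [← Fin.range_succAbove i, ← Set.range_comp]
    refine subset_zcl _ (mem_SecU (p ∘ i.succAbove) (fun j => hp _) ?_)
    rw [← himg]
    exact hspan hx

end Main

/-- If `G_{h,k}(X) = G_{h,k+1}(X)` for some `0 ≤ h < k`, then `S_k(X) = P^r`. -/
theorem Sec_eq_univ_of_Ghk_eq (r h k : ℕ) (hhk : h < k)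
    (X : Set (Fin (r + 1) → ℂ)) (hX : IsProjVar X) (hnd : Nondeg X)
    (heq : GhkCone X h k = GhkCone X h (k + 1)) :
    Sec X k = Set.univ := by
  classical
  have hX0 : (0 : Fin (r + 1) → ℂ) ∈ X := hX.2.1.1
  have hstep2 : ∀ w ∈ zcl (SecU X k), ∀ cc : ℂ, ∀ y ∈ X, w + cc • y ∈ zcl (SecU X k) := by
    intro w hw cc y hy
    have himg : ∀ a ∈ SecU X k,
        (LinearMap.id : (Fin (r + 1) → ℂ) →ₗ[ℂ] (Fin (r + 1) → ℂ)) a + cc • y ∈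
          SecU X (k + 1) := by
      intro a ha
      obtain ⟨p, hp, haspan⟩ := Set.mem_iUnion₂.1 ha
      refine mem_SecU (Fin.snoc p y) (fun j => ?_) ?_
      · induction j using Fin.lastCases with
        | last => rw [Fin.snoc_last]; exact hy
        | cast i => rw [Fin.snoc_castSucc]; exact hp i
      · have h1 : a ∈ Submodule.span ℂ (Set.range (Fin.snoc p y : Fin (k + 2) → _)) := by
          refine Submodule.span_mono ?_ haspan
          rintro _ ⟨i, rfl⟩
          exact ⟨i.castSucc, Fin.snoc_castSucc _ _ _⟩
        have h2 : y ∈ Submodule.span ℂ (Set.range (Fin.snoc p y : Fin (k + 2) → _)) :=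
          Submodule.subset_span ⟨Fin.last _, Fin.snoc_last _ _⟩
        exact add_mem h1 (Submodule.smul_mem _ _ h2)
    have h1 := image_affine_zcl LinearMap.id (cc • y) himg w hw
    rw [LinearMap.id_apply] at h1
    have hsub : SecU X (k + 1) ⊆ zcl (SecU X k) := by
      intro z hz
      obtain ⟨p, hp, hzspan⟩ := Set.mem_iUnion₂.1 hz
      exact span_succ_subset_zcl_SecU hX0 hhk heq p hp z hzspan
    exact zcl_mono_zcl hsub h1
  rw [Sec_eq_zcl_SecU]
  apply Set.eq_univ_of_forall
  intro z
  have hz : z ∈ Submodule.span ℂ X := by rw [hnd]; trivial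
  obtain ⟨n, cf, g, hg⟩ := mem_span_set'.1 hz
  have key : ∀ (n : ℕ) (cf : Fin n → ℂ) (g : Fin n → X),
      (∑ i, cf i • (g i : Fin (r + 1) → ℂ)) ∈ zcl (SecU X k) := by
    intro n
    induction n with
    | zero =>
        intro cf g
        simpa using subset_zcl _ (zero_mem_SecU hX0 k)
    | succ m ih =>
        intro cf g
        rw [Fin.sum_univ_castSucc]
        exact hstep2 _ (ih _ _) _ _ (g (Fin.last m)).2
  rw [← hg]
  exact key n cf g
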